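/- If G is a connected graph with at least one spanning tree T and D is a T-break divisor, then for every vertex subset A ⊆ V(G) spanning a connected induced subgraph H, the degree of D restricted to A is at least the genus of H (number of edges of H minus number of vertices of H plus 1). -/

import Mathlib

structure Multigraph where
  V : Type
  E : Type
  [fV : Fintype V]
  [fE : Fintype E]
  [dV : DecidableEq V]
  [dE : DecidableEq E]
  ends : E → V × V

attribute [instance] Multigraph.fV Multigraph.fE Multigraph.dV Multigraph.dE

namespace Multigraph

variable (G : Multigraph)

/-- No loop edges. -/
def Loopless : Prop := ∀ e : G.E, (G.ends e).1 ≠ (G.ends e).2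

/-- Adjacency via some edge. -/
def Adj (x y : G.V) : Prop := ∃ e : G.E, G.ends e = (x, y) ∨ G.ends e = (y, x)

/-- The multigraph is connected. -/
def Connected : Prop := Nonempty G.V ∧ ∀ x y : G.V, Relation.ReflTransGen G.Adj x y

/-- The degree of a divisor (a divisor is a function `V → ℤ`). -/
def deg (D : G.V → ℤ) : ℤ := ∑ v, D v

/-- The Laplacian divisor `Δ f` of `f : V → ℤ`. -/
def lap (f : G.V → ℤ) : G.V → ℤ := fun v =>
  ∑ e : G.E, ((if (G.ends e).1 = v then f v - f (G.ends e).2 else 0) +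
              (if (G.ends e).2 = v then f v - f (G.ends e).1 else 0))

/-- Linear equivalence of divisors. -/
def LinEquiv (D D' : G.V → ℤ) : Prop := ∃ f : G.V → ℤ, D - D' = G.lap f

/-- `x` and `y` are connected using only edges from `S`. -/
def ConnectsVia (S : Finset G.E) (x y : G.V) : Prop :=
  Relation.ReflTransGen
    (fun a b => ∃ e ∈ S, G.ends e = (a, b) ∨ G.ends e = (b, a)) x y

/-- A spanning tree, as an edge set: it connects all vertices and has
`#V - 1` edges. -/
def IsSpanningTree (T : Finset G.E) : Prop :=
  (∀ x y : G.V, G.ConnectsVia T x y) ∧ T.card + 1 = Fintype.card G.V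

/-- `D` is a `T`-break divisor: one chip on an endpoint of each edge outside `T`. -/
def IsTBreak (T : Finset G.E) (D : G.V → ℤ) : Prop :=
  ∃ ch : G.E → G.V,
    (∀ e ∉ T, ch e = (G.ends e).1 ∨ ch e = (G.ends e).2) ∧
    ∀ v, D v = ((Finset.univ.filter (fun e => e ∉ T ∧ ch e = v)).card : ℤ)

/-- `D` is a break divisor. -/
def IsBreak (D : G.V → ℤ) : Prop := ∃ T, G.IsSpanningTree T ∧ G.IsTBreak T D

/-- The genus `#E - #V + 1`. -/
def genus : ℤ := (Fintype.card G.E : ℤ) - Fintype.card G.V + 1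

end Multigraph

namespace Multigraph

/-- `x` and `y` are connected inside the induced subgraph on `A`. -/
def ConnectsViaInduced (G : Multigraph) (A : Finset G.V) (x y : G.V) : Prop :=
  Relation.ReflTransGen
    (fun a b => ∃ e : G.E, (G.ends e = (a, b) ∨ G.ends e = (b, a)) ∧
      (G.ends e).1 ∈ A ∧ (G.ends e).2 ∈ A) x y

/-- The edge set of the induced subgraph on `A`. -/
def inducedEdges (G : Multigraph) (A : Finset G.V) : Finset G.E :=
  Finset.univ.filter (fun e => (G.ends e).1 ∈ A ∧ (G.ends e).2 ∈ A)

variable (G : Multigraph)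

lemma connectsVia_symm {S : Finset G.E} : Symmetric (G.ConnectsVia S) :=
  fun x y hxy => by
    haveI : Std.Symm (fun a b => ∃ e ∈ S, G.ends e = (a, b) ∨ G.ends e = (b, a)) :=
      ⟨fun _ _ ⟨e, he, h⟩ => ⟨e, he, h.symm⟩⟩
    exact (Relation.ReflTransGen.stdSymm (r := fun a b => ∃ e ∈ S, G.ends e = (a, b) ∨ G.ends e = (b, a))).symm x y hxy

/-- The setoid of connectivity via edges in `S`. -/
def cvSetoid (S : Finset G.E) : Setoid G.V where
  r := G.ConnectsVia S
  iseqv := ⟨fun _ => .refl, fun h => G.connectsVia_symm h, .trans⟩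

/-- Number of connected components of the spanning subgraph with edge set `S`. -/
noncomputable def ncomp (S : Finset G.E) : ℕ := Nat.card (Quotient (G.cvSetoid S))

lemma connectsVia_mono {S S' : Finset G.E} (h : S ⊆ S') {x y : G.V}
    (hxy : G.ConnectsVia S x y) : G.ConnectsVia S' x y :=
  Relation.ReflTransGen.mono (p := fun a b => ∃ e ∈ S', G.ends e = (a, b) ∨ G.ends e = (b, a))
    (fun _ _ ⟨e, he, hh⟩ => ⟨e, h he, hh⟩) x y hxy

lemma conn_insert {S : Finset G.E} {e : G.E} {u v : G.V}
    (h : G.ConnectsVia (insert e S) u v) :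
    G.ConnectsVia S u v ∨
      ((G.ConnectsVia S u (G.ends e).1 ∨ G.ConnectsVia S u (G.ends e).2) ∧
       (G.ConnectsVia S v (G.ends e).1 ∨ G.ConnectsVia S v (G.ends e).2)) := by
  induction h with
  | refl => exact Or.inl .refl
  | @tail b c hst hstep ih =>
    obtain ⟨e', he', hor⟩ := hstep
    rcases Finset.mem_insert.mp he' with rfl | hm
    · rcases hor with h1 | h1
      · have hb : G.ConnectsVia S b (G.ends e').1 := by rw [h1]; exact .refl
        have hc : G.ConnectsVia S c (G.ends e').2 := by rw [h1]; exact .refl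
        rcases ih with h2 | h2
        · exact Or.inr ⟨Or.inl (h2.trans hb), Or.inr hc⟩
        · exact Or.inr ⟨h2.1, Or.inr hc⟩
      · have hb : G.ConnectsVia S b (G.ends e').2 := by rw [h1]; exact .refl
        have hc : G.ConnectsVia S c (G.ends e').1 := by rw [h1]; exact .refl
        rcases ih with h2 | h2
        · exact Or.inr ⟨Or.inr (h2.trans hb), Or.inl hc⟩
        · exact Or.inr ⟨h2.1, Or.inl hc⟩
    · have step : G.ConnectsVia S b c := .single ⟨e', hm, hor⟩
      rcases ih with h2 | h2
      · exact Or.inl (h2.trans step)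
      · exact Or.inr ⟨h2.1, h2.2.imp (fun h3 => ((G.connectsVia_symm step).trans h3))
          (fun h3 => ((G.connectsVia_symm step).trans h3))⟩

lemma ncomp_insert_le (S : Finset G.E) (e : G.E) :
    G.ncomp S ≤ G.ncomp (insert e S) + 1 := by
  classical
  set a := (G.ends e).1 with ha
  let f : Quotient (G.cvSetoid S) → Quotient (G.cvSetoid (insert e S)) ⊕ Unit :=
    Quotient.lift
      (fun u => if G.ConnectsVia S u a then Sum.inr () else
        Sum.inl (Quotient.mk (G.cvSetoid (insert e S)) u))
      (by
        intro u v huv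
        have hiff : G.ConnectsVia S u a ↔ G.ConnectsVia S v a :=
          ⟨fun h => (G.connectsVia_symm huv).trans h, fun h => huv.trans h⟩
        by_cases hu : G.ConnectsVia S u a
        · simp [hu, hiff.mp hu]
        · simp only [if_neg hu, if_neg (fun h => hu (hiff.mpr h))]
          exact congrArg _ (Quotient.sound
            (G.connectsVia_mono (Finset.subset_insert e S) huv)))
  have hinj : Function.Injective f := by
    intro c1 c2 hc
    induction c1 using Quotient.ind
    induction c2 using Quotient.ind
    rename_i u v
    simp only [f, Quotient.lift_mk] at hc
    by_cases hu : G.ConnectsVia S u a <;> by_cases hv : G.ConnectsVia S v a <;>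
      simp only [if_pos, if_neg, hu, hv, if_true, if_false, reduceIte] at hc
    · exact Quotient.sound (hu.trans (G.connectsVia_symm hv))
    · exact absurd hc (by simp)
    · exact absurd hc (by simp)
    · have huv : G.ConnectsVia (insert e S) u v :=
        Quotient.exact (Sum.inl.inj hc)
      rcases G.conn_insert huv with h | ⟨h1, h2⟩
      · exact Quotient.sound h
      · have hub : G.ConnectsVia S u (G.ends e).2 := h1.resolve_left hu
        have hvb : G.ConnectsVia S v (G.ends e).2 := h2.resolve_left hv
        exact Quotient.sound (hub.trans (G.connectsVia_symm hvb))
  calc G.ncomp S ≤ Nat.card (Quotient (G.cvSetoid (insert e S)) ⊕ Unit) :=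
        Nat.card_le_card_of_injective f hinj
    _ = G.ncomp (insert e S) + 1 := by
        rw [Nat.card_sum]; simp [ncomp]

lemma ncomp_bound (S : Finset G.E) : Fintype.card G.V ≤ G.ncomp S + S.card := by
  classical
  induction S using Finset.induction_on with
  | empty =>
    have hinj : Function.Injective (Quotient.mk (G.cvSetoid ∅)) := by
      intro u v h
      have huv : G.ConnectsVia (∅ : Finset G.E) u v := Quotient.exact h
      have hvu : v = u := by
        rw [ConnectsVia, Relation.reflTransGen_iff_eq] at huv
        · exact huv
        · intro b hb
          obtain ⟨e, he, -⟩ := hb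
          exact absurd he (Finset.notMem_empty e)
      exact hvu.symm
    simpa [ncomp, Nat.card_eq_fintype_card] using
      Nat.card_le_card_of_injective _ hinj
  | @insert e S he ih =>
    have h2 := G.ncomp_insert_le S e
    rw [Finset.card_insert_of_notMem he]
    omega

lemma reach_A {A : Finset G.V} {T S : Finset G.E} (hS : S ⊆ G.inducedEdges A)
    {x y : G.V} (h : G.ConnectsVia T x y) :
    G.ConnectsVia (T \ S) x y ∨ ∃ a ∈ A, G.ConnectsVia (T \ S) x a := by
  induction h with
  | refl => exact Or.inl .refl
  | @tail b c hst hstep ih =>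
    obtain ⟨e, heT, hor⟩ := hstep
    by_cases heS : e ∈ S
    · have hends := hS heS
      simp only [inducedEdges, Finset.mem_filter, Finset.mem_univ, true_and] at hends
      have hb : b ∈ A := by
        rcases hor with h1 | h1
        · have he1 : (G.ends e).1 = b := by rw [h1]
          rw [← he1]; exact hends.1
        · have he1 : (G.ends e).2 = b := by rw [h1]
          rw [← he1]; exact hends.2
      rcases ih with h1 | h1
      · exact Or.inr ⟨b, hb, h1⟩
      · exact Or.inr h1
    · have step : G.ConnectsVia (T \ S) b c :=
        .single ⟨e, Finset.mem_sdiff.mpr ⟨heT, heS⟩, hor⟩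
      rcases ih with h1 | h1
      · exact Or.inl (h1.trans step)
      · exact Or.inr h1

lemma ncomp_le_cardA {A : Finset G.V} {T S : Finset G.E}
    (hT : ∀ x y : G.V, G.ConnectsVia T x y) (hA : A.Nonempty)
    (hS : S ⊆ G.inducedEdges A) : G.ncomp (T \ S) ≤ A.card := by
  classical
  obtain ⟨y0, hy0⟩ := hA
  have hall : ∀ x : G.V, ∃ a, a ∈ A ∧ G.ConnectsVia (T \ S) x a := by
    intro x
    rcases G.reach_A hS (hT x y0) with h | ⟨a, ha, h⟩
    · exact ⟨y0, hy0, h⟩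
    · exact ⟨a, ha, h⟩
  let g : Quotient (G.cvSetoid (T \ S)) → {a // a ∈ A} := fun c =>
    ⟨(hall c.out).choose, (hall c.out).choose_spec.1⟩
  have hg : ∀ c, G.ConnectsVia (T \ S) c.out (g c).1 :=
    fun c => (hall c.out).choose_spec.2
  have hinj : Function.Injective g := by
    intro c1 c2 h
    have h1 := hg c1
    have h2 := hg c2
    rw [h] at h1
    have h3 : G.ConnectsVia (T \ S) c1.out c2.out :=
      h1.trans (G.connectsVia_symm h2)
    calc c1 = ⟦c1.out⟧ := (Quotient.out_eq _).symm
      _ = ⟦c2.out⟧ := Quotient.sound h3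
      _ = c2 := Quotient.out_eq _
  have := Nat.card_le_card_of_injective g hinj
  simpa [ncomp, Nat.card_eq_fintype_card, Fintype.card_coe] using this

/-- if `D` is a `T`-break divisor and `A` spans a connected
induced subgraph `H`, then `deg(D|_A) ≥ #E(H) - #A + 1`. -/
theorem tbreak_degree_on_connected_subset (G : Multigraph) (hG : G.Connected)
    (hl : G.Loopless) (T : Finset G.E) (hT : G.IsSpanningTree T)
    (D : G.V → ℤ) (hD : G.IsTBreak T D)
    (A : Finset G.V) (hA : A.Nonempty)
    (hconn : ∀ x ∈ A, ∀ y ∈ A, G.ConnectsViaInduced A x y) :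
    (∑ v ∈ A, D v) ≥ ((G.inducedEdges A).card : ℤ) - A.card + 1 := by
  classical
  obtain ⟨ch, hch, hchD⟩ := hD
  set S : Finset G.E := G.inducedEdges A ∩ T with hSdef
  have hST : S ⊆ T := Finset.inter_subset_right
  have hSA : S ⊆ G.inducedEdges A := Finset.inter_subset_left
  -- S.card + 1 ≤ A.card
  have hScard : S.card + 1 ≤ A.card := by
    have hb := G.ncomp_bound (T \ S)
    have hc := G.ncomp_le_cardA hT.1 hA hSA
    have hsd : (T \ S).card = T.card - S.card := Finset.card_sdiff_of_subset hST
    have hSle : S.card ≤ T.card := Finset.card_le_card hST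
    have hTV := hT.2
    omega
  -- counting the degree on A
  set B : Finset G.E := Finset.univ.filter (fun e => e ∉ T ∧ ch e ∈ A) with hBdef
  have hsum : ∑ v ∈ A, D v = (B.card : ℤ) := by
    have hmem : ∀ e ∈ B, ch e ∈ A := by
      intro e he
      simp only [hBdef, Finset.mem_filter] at he
      exact he.2.2
    have hcard := Finset.card_eq_sum_card_fiberwise hmem
    have hfiber : ∀ v ∈ A, (B.filter fun e => ch e = v)
        = Finset.univ.filter (fun e => e ∉ T ∧ ch e = v) := by
      intro v hv
      ext e
      simp only [hBdef, Finset.mem_filter, Finset.mem_univ, true_and]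
      constructor
      · rintro ⟨⟨h1, -⟩, h3⟩; exact ⟨h1, h3⟩
      · rintro ⟨h1, h2⟩; exact ⟨⟨h1, h2 ▸ hv⟩, h2⟩
    rw [hcard]
    push_cast
    refine Finset.sum_congr rfl ?_
    intro v hv
    rw [hchD v, hfiber v hv]
  -- induced edges outside T are counted in B
  have hsub : G.inducedEdges A \ T ⊆ B := by
    intro e he
    rw [Finset.mem_sdiff] at he
    obtain ⟨heA, heT⟩ := he
    simp only [inducedEdges, Finset.mem_filter, Finset.mem_univ, true_and] at heA
    simp only [hBdef, Finset.mem_filter, Finset.mem_univ, true_and]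
    refine ⟨heT, ?_⟩
    rcases hch e heT with h | h
    · rw [h]; exact heA.1
    · rw [h]; exact heA.2
  have hcard2 : (G.inducedEdges A \ T).card ≤ B.card := Finset.card_le_card hsub
  have hsplit : S.card + (G.inducedEdges A \ T).card = (G.inducedEdges A).card :=
    Finset.card_inter_add_card_sdiff _ _
  rw [ge_iff_le, hsum]
  have h1 : ((G.inducedEdges A).card : ℤ) = (S.card : ℤ) + (G.inducedEdges A \ T).card := by
    exact_mod_cast hsplit.symm
  have h2 : ((G.inducedEdges A \ T).card : ℤ) ≤ (B.card : ℤ) := by exact_mod_cast hcard2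
  have h3 : (S.card : ℤ) + 1 ≤ (A.card : ℤ) := by exact_mod_cast hScard
  linarith

end Multigraph
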